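/- For every nonnegative integer n, b^2_{3,4}(2n) ≡ b_{3,4}(n) (mod 4). -/

import Mathlib

/-- `coloredRegular k l m n` is the number of `k`-colored partitions of `n` into parts
divisible by neither `l` nor `m`, i.e. the coefficient of `q^n` in
`∏_{j ≥ 1, l ∤ j, m ∤ j} (1 - q^j)^{-k}`.  A `k`-colored partition is a multiset of
(part, color) pairs, where parts are positive integers not divisible by `l` or `m`
and colors range over `{0, …, k-1}`. -/
noncomputable def coloredRegular (k l m n : ℕ) : ℕ :=
  Nat.card {M : Multiset (ℕ × ℕ) //
    (∀ x ∈ M, ¬ l ∣ x.1 ∧ ¬ m ∣ x.1 ∧ x.2 < k) ∧ (M.map Prod.fst).sum = n}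

namespace ColReg
open Multiset



def Adm (x : ℕ) : Prop := ¬ 3 ∣ x ∧ ¬ 4 ∣ x

instance : DecidablePred Adm := fun x => by unfold Adm; infer_instance

lemma Adm.pos {x : ℕ} (h : Adm x) : 0 < x := by
  rcases Nat.eq_zero_or_pos x with h0 | h0
  · exact absurd (h0 ▸ dvd_zero 3) h.1
  · exact h0

def PtC (n : ℕ) (M : Multiset ℕ) : Prop := (∀ x ∈ M, Adm x) ∧ M.sum = n
abbrev Pt (n : ℕ) := {M : Multiset ℕ // PtC n M}

def ZC (r : ℕ) (w : Multiset ℕ × Multiset ℕ) : Prop :=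
  (∀ x ∈ w.1, Adm x) ∧ (∀ x ∈ w.2, Adm x) ∧ w.1.Nodup ∧ w.1.sum + w.2.sum = r
abbrev Zt (r : ℕ) := {w : Multiset ℕ × Multiset ℕ // ZC r w}

def XC (N : ℕ) (w : Multiset ℕ × Multiset ℕ) : Prop :=
  (∀ x ∈ w.1, Adm x) ∧ (∀ x ∈ w.2, Adm x) ∧ w.1.sum + w.2.sum = N
abbrev Xt (N : ℕ) := {w : Multiset ℕ × Multiset ℕ // XC N w}

def YC (N : Nat) (w : Multiset Nat × Multiset Nat × Multiset Nat) : Prop :=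
  (∀ x ∈ w.1, Adm x) ∧ (∀ x ∈ w.2.1, Adm x) ∧ (∀ x ∈ w.2.2, Adm x) ∧ w.2.1.Nodup ∧
    2 * w.1.sum + w.2.1.sum + w.2.2.sum = N
abbrev Yt (N : Nat) := {w : Multiset Nat × Multiset Nat × Multiset Nat // YC N w}

/-! ### Finiteness -/

lemma finite_sum_eq (m : ℕ) :
    {M : Multiset ℕ | (∀ x ∈ M, 0 < x) ∧ M.sum = m}.Finite := by
  rw [← Set.finite_coe_iff]
  exact Finite.of_injective
    (fun M => (⟨M.1, fun {x} hx => M.2.1 x hx, M.2.2⟩ : Nat.Partition m))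
    (fun a b h => Subtype.ext (congrArg Nat.Partition.parts h))

lemma finite_sum_le (n : ℕ) :
    {M : Multiset ℕ | (∀ x ∈ M, 0 < x) ∧ M.sum ≤ n}.Finite := by
  have : {M : Multiset ℕ | (∀ x ∈ M, 0 < x) ∧ M.sum ≤ n} ⊆
      ⋃ m ∈ Finset.range (n+1), {M : Multiset ℕ | (∀ x ∈ M, 0 < x) ∧ M.sum = m} := by
    intro M hM
    simp only [Set.mem_iUnion, Finset.mem_range]
    exact ⟨M.sum, Nat.lt_succ_of_le hM.2, hM.1, rfl⟩
  exact Set.Finite.subset (Set.Finite.biUnion (Finset.finite_toSet _)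
    (fun m _ => finite_sum_eq m)) this

instance instFinPt (n : ℕ) : Finite (Pt n) :=
  Set.Finite.to_subtype ((finite_sum_eq n).subset
    (fun M hM => ⟨fun x hx => (hM.1 x hx).pos, hM.2⟩))

instance instFinZt (r : ℕ) : Finite (Zt r) :=
  Set.Finite.to_subtype (((finite_sum_le r).prod (finite_sum_le r)).subset
    (fun w hw => ⟨⟨fun x hx => (hw.1 x hx).pos, le_trans (Nat.le_add_right _ _) hw.2.2.2.le⟩,
      ⟨fun x hx => (hw.2.1 x hx).pos, le_trans (Nat.le_add_left _ _) hw.2.2.2.le⟩⟩))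

instance instFinXt (N : ℕ) : Finite (Xt N) :=
  Set.Finite.to_subtype (((finite_sum_le N).prod (finite_sum_le N)).subset
    (fun w hw => ⟨⟨fun x hx => (hw.1 x hx).pos, le_trans (Nat.le_add_right _ _) hw.2.2.le⟩,
      ⟨fun x hx => (hw.2.1 x hx).pos, le_trans (Nat.le_add_left _ _) hw.2.2.le⟩⟩))




/-! ### E1 : colored partitions vs pairs of plain partitions -/

noncomputable def coloredRegular' (k l m n : ℕ) : ℕ :=
  Nat.card {M : Multiset (ℕ × ℕ) //
    (∀ x ∈ M, ¬ l ∣ x.1 ∧ ¬ m ∣ x.1 ∧ x.2 < k) ∧ (M.map Prod.fst).sum = n}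

def equivOne (n : ℕ) :
    {M : Multiset (ℕ × ℕ) //
      (∀ x ∈ M, ¬ (3:ℕ) ∣ x.1 ∧ ¬ (4:ℕ) ∣ x.1 ∧ x.2 < 1) ∧ (M.map Prod.fst).sum = n} ≃ Pt n where
  toFun M := ⟨M.1.map Prod.fst, fun x hx => by
      obtain ⟨y, hy, rfl⟩ := Multiset.mem_map.mp hx
      exact ⟨(M.2.1 y hy).1, (M.2.1 y hy).2.1⟩, M.2.2⟩
  invFun A := ⟨A.1.map (fun a => (a, 0)), by
      constructor
      · intro x hx
        obtain ⟨y, hy, rfl⟩ := Multiset.mem_map.mp hx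
        exact ⟨(A.2.1 y hy).1, (A.2.1 y hy).2, Nat.zero_lt_one⟩
      · rw [Multiset.map_map]
        simpa using A.2.2⟩
  left_inv M := by
    apply Subtype.ext
    simp only [Multiset.map_map]
    calc M.1.map ((fun a => (a, 0)) ∘ Prod.fst)
        = M.1.map id := Multiset.map_congr rfl (fun x hx => by
          have := (M.2.1 x hx).2.2
          have h0 : x.2 = 0 := Nat.lt_one_iff.mp this
          simp [Function.comp, ← h0])
      _ = M.1 := Multiset.map_id _
  right_inv A := by
    apply Subtype.ext
    simp [Multiset.map_map]


def equivTwo (N : Nat) :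
    {M : Multiset (Nat × Nat) //
      (∀ x ∈ M, ¬ (3:Nat) ∣ x.1 ∧ ¬ (4:Nat) ∣ x.1 ∧ x.2 < 2) ∧ (M.map Prod.fst).sum = N} ≃ Xt N where
  toFun M := ⟨((M.1.filter (fun x => x.2 = 0)).map Prod.fst,
               (M.1.filter (fun x => ¬ x.2 = 0)).map Prod.fst), by
    refine ⟨?_, ?_, ?_⟩
    · intro x hx
      obtain ⟨y, hy, rfl⟩ := Multiset.mem_map.mp hx
      have := M.2.1 y (Multiset.mem_of_mem_filter hy)
      exact ⟨this.1, this.2.1⟩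
    · intro x hx
      obtain ⟨y, hy, rfl⟩ := Multiset.mem_map.mp hx
      have := M.2.1 y (Multiset.mem_of_mem_filter hy)
      exact ⟨this.1, this.2.1⟩
    · have h : (M.1.filter (fun x => x.2 = 0)).map Prod.fst
            + (M.1.filter (fun x => ¬ x.2 = 0)).map Prod.fst
          = M.1.map Prod.fst := by
        rw [← Multiset.map_add, Multiset.filter_add_not]
      have := congrArg Multiset.sum h
      rw [Multiset.sum_add] at this
      exact this.trans M.2.2⟩
  invFun w := ⟨w.1.1.map (fun a => (a, 0)) + w.1.2.map (fun a => (a, 1)), by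
    constructor
    · intro x hx
      rcases Multiset.mem_add.mp hx with h | h <;>
        obtain ⟨y, hy, rfl⟩ := Multiset.mem_map.mp h
      · exact ⟨(w.2.1 y hy).1, (w.2.1 y hy).2, by norm_num⟩
      · exact ⟨(w.2.2.1 y hy).1, (w.2.2.1 y hy).2, by norm_num⟩
    · rw [Multiset.map_add, Multiset.map_map, Multiset.map_map, Multiset.sum_add]
      simpa using w.2.2.2⟩
  left_inv M := by
    apply Subtype.ext
    simp only [Multiset.map_map]
    have h1 : (M.1.filter (fun x => x.2 = 0)).map ((fun a => (a, 0)) ∘ Prod.fst)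
        = M.1.filter (fun x => x.2 = 0) := by
      calc (M.1.filter (fun x => x.2 = 0)).map ((fun a => (a, 0)) ∘ Prod.fst)
          = (M.1.filter (fun x => x.2 = 0)).map id := Multiset.map_congr rfl (by
            intro x hx
            have := (Multiset.mem_filter.mp hx).2
            simp only [Function.comp_apply, id_eq]
            exact Prod.ext rfl this.symm)
        _ = _ := Multiset.map_id _
    have h2 : (M.1.filter (fun x => ¬ x.2 = 0)).map ((fun a => (a, 1)) ∘ Prod.fst)
        = M.1.filter (fun x => ¬ x.2 = 0) := by
      calc (M.1.filter (fun x => ¬ x.2 = 0)).map ((fun a => (a, 1)) ∘ Prod.fst)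
          = (M.1.filter (fun x => ¬ x.2 = 0)).map id := Multiset.map_congr rfl (by
            intro x hx
            have hne := (Multiset.mem_filter.mp hx).2
            have hlt := (M.2.1 x (Multiset.mem_of_mem_filter hx)).2.2
            have h1 : x.2 = 1 := by omega
            simp only [Function.comp_apply, id_eq]
            exact Prod.ext rfl h1.symm)
        _ = _ := Multiset.map_id _
    rw [h1, h2, Multiset.filter_add_not]
  right_inv w := by
    apply Subtype.ext
    apply Prod.ext
    · show Multiset.map Prod.fst (Multiset.filter _ _) = w.1.1
      rw [Multiset.filter_add, Multiset.filter_map, Multiset.filter_map]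
      simp only [Function.comp]
      norm_num
    · show Multiset.map Prod.fst (Multiset.filter _ _) = w.1.2
      rw [Multiset.filter_add, Multiset.filter_map, Multiset.filter_map]
      simp only [Function.comp]
      norm_num

lemma mem_of_mem_sub {a : Nat} {s t : Multiset Nat} (h : a ∈ s - t) : a ∈ s := by
  rw [← Multiset.count_pos, Multiset.count_sub] at h
  rw [← Multiset.count_pos]; omega

lemma inter_add_sub (A B : Multiset Nat) : A ∩ B + (A - B) = A := by
  ext a
  simp only [Multiset.count_add, Multiset.count_inter, Multiset.count_sub]
  omega

lemma inter_add_sub' (A B : Multiset Nat) : A ∩ B + (B - A) = B := by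
  ext a
  simp only [Multiset.count_add, Multiset.count_inter, Multiset.count_sub]
  omega

lemma dedup_add_sub (D : Multiset Nat) : D.dedup + (D - D.dedup) = D :=
  add_tsub_cancel_of_le (Multiset.dedup_le D)

-- round trip 1a
lemma rt1a (A B : Multiset Nat) :
    A ∩ B + dedup (A - B) +
      ((A - B) - dedup (A - B) + (B - A)).filter (· ∈ dedup (A - B)) = A := by
  ext a
  by_cases h : a ∈ A - B
  · have h' := h
    rw [← Multiset.count_pos, Multiset.count_sub] at h'
    simp only [Multiset.count_add, Multiset.count_inter, Multiset.count_sub,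
      Multiset.count_dedup, Multiset.count_filter, Multiset.mem_dedup, h, if_pos]
    omega
  · have h' := h
    rw [← Multiset.count_pos, Multiset.count_sub, Nat.pos_iff_ne_zero, not_not] at h'
    simp only [Multiset.count_add, Multiset.count_inter, Multiset.count_sub,
      Multiset.count_dedup, Multiset.count_filter, Multiset.mem_dedup, h, if_neg,
      not_false_iff]
    omega

-- round trip 1b
lemma rt1b (A B : Multiset Nat) :
    A ∩ B + ((A - B) - dedup (A - B) + (B - A)).filter (¬ · ∈ dedup (A - B)) = B := by
  ext a
  by_cases h : a ∈ A - B
  · have h' := h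
    rw [← Multiset.count_pos, Multiset.count_sub] at h'
    simp only [Multiset.count_add, Multiset.count_inter, Multiset.count_sub,
      Multiset.count_dedup, Multiset.count_filter, Multiset.mem_dedup, h, if_pos,
      not_true, if_neg, not_false_iff]
    omega
  · have h' := h
    rw [← Multiset.count_pos, Multiset.count_sub, Nat.pos_iff_ne_zero, not_not] at h'
    simp only [Multiset.count_add, Multiset.count_inter, Multiset.count_sub,
      Multiset.count_dedup, Multiset.count_filter, Multiset.mem_dedup, h, if_neg,
      not_false_iff, if_pos, not_false_eq_true]
    omega

-- round trip 2: starting from (M, S, T) with S nodup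
section RT2
variable (M S T : Multiset Nat) (hS : S.Nodup)

lemma rt2a (hS : S.Nodup) :
    (M + S + T.filter (· ∈ S)) ∩ (M + T.filter (¬ · ∈ S)) = M := by
  ext a
  have hs : Multiset.count a S ≤ 1 := Multiset.nodup_iff_count_le_one.mp hS a
  by_cases h : a ∈ S
  · have h1 : 1 ≤ Multiset.count a S := Multiset.one_le_count_iff_mem.mpr h
    simp only [Multiset.count_inter, Multiset.count_add, Multiset.count_filter, h, if_pos,
      not_true, if_neg, not_false_iff]
    omega
  · simp only [Multiset.count_inter, Multiset.count_add, Multiset.count_filter, h, if_neg,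
      not_false_iff, if_pos, not_false_eq_true]
    have h0 : Multiset.count a S = 0 := Multiset.count_eq_zero.mpr h
    omega

lemma rt2b (hS : S.Nodup) :
    dedup ((M + S + T.filter (· ∈ S)) - (M + T.filter (¬ · ∈ S))) = S := by
  ext a
  have hs : Multiset.count a S ≤ 1 := Multiset.nodup_iff_count_le_one.mp hS a
  rw [Multiset.count_dedup]
  by_cases h : a ∈ S
  · have h1 : 1 ≤ Multiset.count a S := Multiset.one_le_count_iff_mem.mpr h
    rw [if_pos]
    · omega
    · rw [← Multiset.count_pos, Multiset.count_sub]
      simp only [Multiset.count_add, Multiset.count_filter, h, if_pos, not_true, if_neg,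
        not_false_iff]
      omega
  · have h0 : Multiset.count a S = 0 := Multiset.count_eq_zero.mpr h
    rw [if_neg]
    · omega
    · rw [← Multiset.count_pos, Multiset.count_sub, Nat.pos_iff_ne_zero, not_not]
      simp only [Multiset.count_add, Multiset.count_filter, h, if_neg, not_false_iff,
        if_pos, not_false_eq_true]
      omega

lemma rt2c (hS : S.Nodup) :
    ((M + S + T.filter (· ∈ S)) - (M + T.filter (¬ · ∈ S))) -
        dedup ((M + S + T.filter (· ∈ S)) - (M + T.filter (¬ · ∈ S))) +
      ((M + T.filter (¬ · ∈ S)) - (M + S + T.filter (· ∈ S))) = T := by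
  rw [rt2b M S T hS]
  ext a
  have hs : Multiset.count a S ≤ 1 := Multiset.nodup_iff_count_le_one.mp hS a
  by_cases h : a ∈ S
  · have h1 : 1 ≤ Multiset.count a S := Multiset.one_le_count_iff_mem.mpr h
    simp only [Multiset.count_add, Multiset.count_sub, Multiset.count_filter, h, if_pos,
      not_true, if_neg, not_false_iff]
    omega
  · have h0 : Multiset.count a S = 0 := Multiset.count_eq_zero.mpr h
    simp only [Multiset.count_add, Multiset.count_sub, Multiset.count_filter, h, if_neg,
      not_false_iff, if_pos, not_false_eq_true]
    omega

end RT2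

def equivXY (N : Nat) : Xt N ≃ Yt N where
  toFun w := ⟨(w.1.1 ∩ w.1.2, dedup (w.1.1 - w.1.2),
      (w.1.1 - w.1.2) - dedup (w.1.1 - w.1.2) + (w.1.2 - w.1.1)), by
    obtain ⟨⟨A, B⟩, hA, hB, hsum⟩ := w
    refine ⟨?_, ?_, ?_, Multiset.nodup_dedup _, ?_⟩
    · intro x hx
      exact hA x (Multiset.mem_inter.mp hx).1
    · intro x hx
      exact hA x (mem_of_mem_sub (Multiset.mem_dedup.mp hx))
    · intro x hx
      rcases Multiset.mem_add.mp hx with h | h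
      · exact hA x (mem_of_mem_sub (mem_of_mem_sub h))
      · exact hB x (mem_of_mem_sub h)
    · have e1 := congrArg Multiset.sum (inter_add_sub A B)
      have e2 := congrArg Multiset.sum (inter_add_sub' A B)
      have e3 := congrArg Multiset.sum (dedup_add_sub (A - B))
      rw [Multiset.sum_add] at e1 e2 e3
      simp only [Multiset.sum_add]
      dsimp only at hsum ⊢
      omega⟩
  invFun w := ⟨(w.1.1 + w.1.2.1 + w.1.2.2.filter (· ∈ w.1.2.1),
      w.1.1 + w.1.2.2.filter (¬ · ∈ w.1.2.1)), by
    obtain ⟨⟨M, S, T⟩, hM, hS, hT, hnd, hsum⟩ := w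
    refine ⟨?_, ?_, ?_⟩
    · intro x hx
      rcases Multiset.mem_add.mp hx with h | h
      · rcases Multiset.mem_add.mp h with h' | h'
        · exact hM x h'
        · exact hS x h'
      · exact hT x (Multiset.mem_of_mem_filter h)
    · intro x hx
      rcases Multiset.mem_add.mp hx with h | h
      · exact hM x h
      · exact hT x (Multiset.mem_of_mem_filter h)
    · have e : (T.filter (· ∈ S)).sum + (T.filter (¬ · ∈ S)).sum = T.sum := by
        rw [← Multiset.sum_add, Multiset.filter_add_not]
      simp only [Multiset.sum_add]
      dsimp only at hsum ⊢
      omega⟩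
  left_inv w := by
    apply Subtype.ext
    obtain ⟨⟨A, B⟩, hw⟩ := w
    exact Prod.ext (rt1a A B) (rt1b A B)
  right_inv w := by
    apply Subtype.ext
    obtain ⟨⟨M, S, T⟩, hM, hS, hT, hnd, hsum⟩ := w
    refine Prod.ext (rt2a M S T hnd) (Prod.ext (rt2b M S T hnd) (rt2c M S T hnd))

def sliceFun (n : Nat) (w : Yt (2 * n)) : Fin (n + 1) :=
  ⟨w.1.1.sum, by
    obtain ⟨⟨M, S, T⟩, h⟩ := w
    have := h.2.2.2.2
    dsimp only at this ⊢
    omega⟩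

def fiberEquiv (n : Nat) (m : Fin (n + 1)) :
    {w : Yt (2 * n) // sliceFun n w = m} ≃ Pt m.1 × Zt (2 * (n - m.1)) where
  toFun w :=
    (⟨w.1.1.1, w.1.2.1, congrArg Fin.val w.2⟩,
     ⟨(w.1.1.2.1, w.1.1.2.2), w.1.2.2.1, w.1.2.2.2.1, w.1.2.2.2.2.1, by
        have hsum := w.1.2.2.2.2.2
        have hm : w.1.1.1.sum = m.1 := congrArg Fin.val w.2
        have hle : m.1 ≤ n := by omega
        dsimp only
        omega⟩)
  invFun p :=
    ⟨⟨(p.1.1, p.2.1.1, p.2.1.2), by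
      refine ⟨p.1.2.1, p.2.2.1, p.2.2.2.1, p.2.2.2.2.1, ?_⟩
      have h1 := p.1.2.2
      have h2 := p.2.2.2.2.2
      have hle : m.1 ≤ n := by omega
      dsimp only
      omega⟩, by
      apply Fin.ext
      exact p.1.2.2⟩
  left_inv w := by
    apply Subtype.ext
    apply Subtype.ext
    rfl
  right_inv p := by
    apply Prod.ext
    · apply Subtype.ext; rfl
    · apply Subtype.ext; rfl

lemma card_Y (n : Nat) [Finite (Yt (2*n))] [∀ k, Finite (Pt k)] [∀ k, Finite (Zt k)] :
    Nat.card (Yt (2 * n)) =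
      ∑ m : Fin (n + 1), Nat.card (Pt m.1) * Nat.card (Zt (2 * (n - m.1))) := by
  classical
  rw [← Nat.card_congr (Equiv.sigmaFiberEquiv (sliceFun n))]
  haveI : ∀ m : Fin (n+1), Finite {w : Yt (2 * n) // sliceFun n w = m} := by
    intro m; exact Finite.of_injective Subtype.val Subtype.val_injective
  haveI : ∀ m : Fin (n+1), Fintype {w : Yt (2 * n) // sliceFun n w = m} := fun m =>
    Fintype.ofFinite _
  rw [Nat.card_eq_fintype_card, Fintype.card_sigma]
  apply Finset.sum_congr rfl
  intro m _
  rw [← Nat.card_eq_fintype_card, Nat.card_congr (fiberEquiv n m), Nat.card_prod]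

abbrev γ := Multiset Nat × Multiset Nat

def sup (w : γ) : Finset Nat := (w.1 + w.2).toFinset
noncomputable def top (w : γ) : Nat := WithBot.unbotD 0 (sup w).max
noncomputable def top2 (w : γ) : Nat := WithBot.unbotD 0 ((sup w).erase (top w)).max

lemma max_unbot'_mem {s : Finset Nat} (h : s.Nonempty) :
    WithBot.unbotD 0 s.max ∈ s ∧ ∀ x ∈ s, x ≤ WithBot.unbotD 0 s.max := by
  have hc := Finset.coe_max' h
  rw [← hc]
  rw [WithBot.unbotD_coe]
  exact ⟨Finset.max'_mem s h, fun x hx => Finset.le_max' s x hx⟩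

lemma W_ne_zero {r : Nat} (hr : 0 < r) {w : γ} (h : ZC r w) : w.1 + w.2 ≠ 0 := by
  intro h0
  have h2 : w.1.sum + w.2.sum = 0 := by
    have := congrArg Multiset.sum h0
    rw [Multiset.sum_add] at this
    simpa using this
  have h3 := h.2.2.2
  omega

lemma sup_nonempty {r : Nat} (hr : 0 < r) {w : γ} (h : ZC r w) : (sup w).Nonempty := by
  rw [Finset.nonempty_iff_ne_empty]
  intro h0
  have := Multiset.toFinset_eq_empty.mp h0
  exact W_ne_zero hr h this

lemma top_mem_W {r : Nat} (hr : 0 < r) {w : γ} (h : ZC r w) : top w ∈ w.1 + w.2 :=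
  Multiset.mem_toFinset.mp (max_unbot'_mem (sup_nonempty hr h)).1

lemma sup_congr {w v : γ} (h : w.1 + w.2 = v.1 + v.2) : sup w = sup v := by
  unfold sup; rw [h]

lemma top_congr {w v : γ} (h : w.1 + w.2 = v.1 + v.2) : top w = top v := by
  unfold top; rw [sup_congr h]

lemma top2_congr {w v : γ} (h : w.1 + w.2 = v.1 + v.2) : top2 w = top2 v := by
  unfold top2; rw [sup_congr h, top_congr h]

/-! moves -/

def mOut (w : γ) (j : Nat) : γ := (w.1.erase j, j ::ₘ w.2)
def mIn (w : γ) (j : Nat) : γ := (j ::ₘ w.1, w.2.erase j)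

lemma W_mOut {w : γ} {j : Nat} (h : j ∈ w.1) :
    (mOut w j).1 + (mOut w j).2 = w.1 + w.2 := by
  unfold mOut
  ext a
  have h1 : 1 ≤ Multiset.count j w.1 := Multiset.one_le_count_iff_mem.mpr h
  by_cases haj : a = j
  · subst haj
    simp only [Multiset.count_add, Multiset.count_cons_self, Multiset.count_erase_self]
    omega
  · simp only [Multiset.count_add, Multiset.count_cons_of_ne haj,
      Multiset.count_erase_of_ne haj]

lemma W_mIn {w : γ} {j : Nat} (h : j ∈ w.2) :
    (mIn w j).1 + (mIn w j).2 = w.1 + w.2 := by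
  unfold mIn
  ext a
  have h1 : 1 ≤ Multiset.count j w.2 := Multiset.one_le_count_iff_mem.mpr h
  by_cases haj : a = j
  · subst haj
    simp only [Multiset.count_add, Multiset.count_cons_self, Multiset.count_erase_self]
    omega
  · simp only [Multiset.count_add, Multiset.count_cons_of_ne haj,
      Multiset.count_erase_of_ne haj]

lemma ZC_mOut {r : Nat} {w : γ} {j : Nat} (h : ZC r w) (hj : j ∈ w.1) :
    ZC r (mOut w j) := by
  obtain ⟨h1, h2, h3, h4⟩ := h
  refine ⟨fun x hx => h1 x (Multiset.mem_of_mem_erase hx),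
    fun x hx => ?_, h3.erase j, ?_⟩
  · rcases Multiset.mem_cons.mp hx with rfl | hx'
    · exact h1 x hj
    · exact h2 x hx'
  · have := congrArg Multiset.sum (W_mOut hj)
    rw [Multiset.sum_add, Multiset.sum_add] at this
    omega

lemma ZC_mIn {r : Nat} {w : γ} {j : Nat} (h : ZC r w) (hj : j ∈ w.2) (hj1 : j ∉ w.1) :
    ZC r (mIn w j) := by
  obtain ⟨h1, h2, h3, h4⟩ := h
  refine ⟨fun x hx => ?_, fun x hx => h2 x (Multiset.mem_of_mem_erase hx),
    Multiset.nodup_cons.mpr ⟨hj1, h3⟩, ?_⟩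
  · rcases Multiset.mem_cons.mp hx with rfl | hx'
    · exact h2 x hj
    · exact h1 x hx'
  · have := congrArg Multiset.sum (W_mIn hj)
    rw [Multiset.sum_add, Multiset.sum_add] at this
    omega

lemma mIn_mOut {w : γ} {j : Nat} (hj : j ∈ w.1) : mIn (mOut w j) j = w := by
  unfold mIn mOut
  exact Prod.ext (Multiset.cons_erase hj) (Multiset.erase_cons_head j w.2)

lemma mOut_mIn {w : γ} {j : Nat} (hj : j ∈ w.2) : mOut (mIn w j) j = w := by
  unfold mIn mOut
  exact Prod.ext (Multiset.erase_cons_head j w.1) (Multiset.cons_erase hj)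

/-! generic splitting -/

def splitE {α : Type} {c p : α → Prop} [DecidablePred p] :
    {w : α // c w} ≃ {w : α // c w ∧ p w} ⊕ {w : α // c w ∧ ¬ p w} where
  toFun z := if h : p z.1 then Sum.inl ⟨z.1, z.2, h⟩ else Sum.inr ⟨z.1, z.2, h⟩
  invFun z := z.elim (fun u => ⟨u.1, u.2.1⟩) (fun u => ⟨u.1, u.2.1⟩)
  left_inv z := by by_cases h : p z.1 <;> simp [h]
  right_inv z := by
    rcases z with u | u
    · simp [u.2.2]
    · simp [u.2.2]

lemma finite_and {α : Type} {c p : α → Prop} [Finite {w : α // c w}] :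
    Finite {w : α // c w ∧ p w} :=
  Finite.of_injective (fun w => (⟨w.1, w.2.1⟩ : {w : α // c w}))
    (fun a b h => by
      have h2 : (⟨a.1, a.2.1⟩ : {w : α // c w}).val = (⟨b.1, b.2.1⟩ : {w : α // c w}).val :=
        congrArg Subtype.val h
      exact Subtype.ext h2)

lemma card_split {α : Type} (c p : α → Prop) [DecidablePred p] [Finite {w : α // c w}]
    (e : {w : α // c w ∧ p w} ≃ {w : α // c w ∧ ¬ p w}) :
    Nat.card {w : α // c w} = 2 * Nat.card {w : α // c w ∧ p w} := by
  haveI : Finite {w : α // c w ∧ p w} := finite_and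
  haveI : Finite {w : α // c w ∧ ¬ p w} := finite_and
  rw [Nat.card_congr (splitE (c := c) (p := p)), Nat.card_sum,
    ← Nat.card_congr e]
  ring

lemma card_split_add {α : Type} (c p : α → Prop) [DecidablePred p] [Finite {w : α // c w}] :
    Nat.card {w : α // c w} =
      Nat.card {w : α // c w ∧ p w} + Nat.card {w : α // c w ∧ ¬ p w} := by
  haveI : Finite {w : α // c w ∧ p w} := finite_and
  haveI : Finite {w : α // c w ∧ ¬ p w} := finite_and
  rw [Nat.card_congr (splitE (c := c) (p := p)), Nat.card_sum]


/-! ### the first toggle -/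

noncomputable def toggleTop (r : Nat) (hr : 0 < r) :
    {w : γ // ZC r w ∧ top w ∈ w.1} ≃ {w : γ // ZC r w ∧ ¬ top w ∈ w.1} where
  toFun z := ⟨mOut z.1 (top z.1), by
    obtain ⟨w, hZ, hp⟩ := z
    refine ⟨ZC_mOut hZ hp, ?_⟩
    rw [top_congr (W_mOut hp)]
    exact hZ.2.2.1.notMem_erase⟩
  invFun z := ⟨mIn z.1 (top z.1), by
    obtain ⟨w, hZ, hp⟩ := z
    have hm2 : top w ∈ w.2 := by
      rcases Multiset.mem_add.mp (top_mem_W hr hZ) with h | h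
      · exact absurd h hp
      · exact h
    refine ⟨ZC_mIn hZ hm2 hp, ?_⟩
    rw [top_congr (W_mIn hm2)]
    exact Multiset.mem_cons_self _ _⟩
  left_inv z := by
    obtain ⟨w, hZ, hp⟩ := z
    apply Subtype.ext
    show mIn (mOut w (top w)) (top (mOut w (top w))) = w
    rw [top_congr (W_mOut hp)]
    exact mIn_mOut hp
  right_inv z := by
    obtain ⟨w, hZ, hp⟩ := z
    have hm2 : top w ∈ w.2 := by
      rcases Multiset.mem_add.mp (top_mem_W hr hZ) with h | h
      · exact absurd h hp
      · exact h
    apply Subtype.ext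
    show mOut (mIn w (top w)) (top (mIn w (top w))) = w
    rw [top_congr (W_mIn hm2)]
    exact mOut_mIn hm2

/-! ### the second toggle -/

lemma top2_facts {w : γ} (hq : 2 ≤ (sup w).card) :
    top2 w ∈ sup w ∧ top2 w ≠ top w := by
  have hne : ((sup w).erase (top w)).Nonempty := by
    rw [← Finset.card_pos]
    by_cases h : top w ∈ sup w
    · rw [Finset.card_erase_of_mem h]
      omega
    · rw [Finset.erase_eq_of_notMem h]
      omega
  have := (max_unbot'_mem hne).1
  have h2 := Finset.mem_erase.mp this
  exact ⟨h2.2, h2.1⟩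

noncomputable def toggleTop2 (r : Nat) (hr : 0 < r) :
    {w : γ // ((ZC r w ∧ top w ∈ w.1) ∧ 2 ≤ (sup w).card) ∧ top2 w ∈ w.1} ≃
    {w : γ // ((ZC r w ∧ top w ∈ w.1) ∧ 2 ≤ (sup w).card) ∧ ¬ top2 w ∈ w.1} where
  toFun z := ⟨mOut z.1 (top2 z.1), by
    obtain ⟨w, ⟨⟨hZ, hp⟩, hq⟩, hp2⟩ := z
    have hWinv := W_mOut hp2
    have hne := (top2_facts hq).2
    refine ⟨⟨⟨ZC_mOut hZ hp2, ?_⟩, ?_⟩, ?_⟩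
    · rw [top_congr hWinv]
      exact (Multiset.mem_erase_of_ne (Ne.symm hne)).mpr hp
    · rw [sup_congr hWinv]
      exact hq
    · rw [top2_congr hWinv]
      exact hZ.2.2.1.notMem_erase⟩
  invFun z := ⟨mIn z.1 (top2 z.1), by
    obtain ⟨w, ⟨⟨hZ, hp⟩, hq⟩, hp2⟩ := z
    have htm : top2 w ∈ w.1 + w.2 := Multiset.mem_toFinset.mp (top2_facts hq).1
    have hm2 : top2 w ∈ w.2 := by
      rcases Multiset.mem_add.mp htm with h | h
      · exact absurd h hp2
      · exact h
    have hWinv := W_mIn hm2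
    refine ⟨⟨⟨ZC_mIn hZ hm2 hp2, ?_⟩, ?_⟩, ?_⟩
    · rw [top_congr hWinv]
      exact Multiset.mem_cons_of_mem hp
    · rw [sup_congr hWinv]
      exact hq
    · rw [top2_congr hWinv]
      exact Multiset.mem_cons_self _ _⟩
  left_inv z := by
    obtain ⟨w, ⟨⟨hZ, hp⟩, hq⟩, hp2⟩ := z
    apply Subtype.ext
    show mIn (mOut w (top2 w)) (top2 (mOut w (top2 w))) = w
    rw [top2_congr (W_mOut hp2)]
    exact mIn_mOut hp2
  right_inv z := by
    obtain ⟨w, ⟨⟨hZ, hp⟩, hq⟩, hp2⟩ := z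
    have htm : top2 w ∈ w.1 + w.2 := Multiset.mem_toFinset.mp (top2_facts hq).1
    have hm2 : top2 w ∈ w.2 := by
      rcases Multiset.mem_add.mp htm with h | h
      · exact absurd h hp2
      · exact h
    apply Subtype.ext
    show mOut (mIn w (top2 w)) (top2 (mIn w (top2 w))) = w
    rw [top2_congr (W_mIn hm2)]
    exact mOut_mIn hm2


/-! ### the one-part-value case -/

def DivC (r j : Nat) : Prop := Adm j ∧ j ∣ r ∧ 0 < j

lemma sup_of_replicate {j : Nat} (hj : 0 < j) (k : Nat) :
    sup (({j} : Multiset Nat), Multiset.replicate k j) = {j} := by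
  apply Finset.ext
  intro a
  simp only [sup, Multiset.mem_toFinset, Multiset.mem_add, Finset.mem_singleton,
    Multiset.mem_singleton]
  constructor
  · rintro (h | h)
    · exact h
    · exact Multiset.eq_of_mem_replicate h
  · rintro rfl
    exact Or.inl rfl

lemma top_of_replicate {j : Nat} (hj : 0 < j) (k : Nat) :
    top (({j} : Multiset Nat), Multiset.replicate k j) = j := by
  unfold top
  rw [sup_of_replicate hj k, Finset.max_singleton, WithBot.unbotD_coe]

lemma singleton_structure {r : Nat} (hr : 0 < r) {w : γ}
    (h : (ZC r w ∧ top w ∈ w.1) ∧ ¬ 2 ≤ (sup w).card) :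
    w.1 = {top w} ∧ w.2 = Multiset.replicate (r / top w - 1) (top w) ∧
      DivC r (top w) := by
  obtain ⟨⟨hZ, hp⟩, hq⟩ := h
  set j := top w with hjdef
  have hjW : j ∈ w.1 + w.2 := top_mem_W hr hZ
  have hjs : j ∈ sup w := Multiset.mem_toFinset.mpr hjW
  have hcard : (sup w).card ≤ 1 := by omega
  have hall : ∀ x ∈ w.1 + w.2, x = j := by
    intro x hx
    exact Finset.card_le_one.mp hcard x (Multiset.mem_toFinset.mpr hx) j hjs
  have hall1 : ∀ x ∈ w.1, x = j := fun x hx => hall x (Multiset.mem_add.mpr (Or.inl hx))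
  have hall2 : ∀ x ∈ w.2, x = j := fun x hx => hall x (Multiset.mem_add.mpr (Or.inr hx))
  have hAdm : Adm j := hZ.1 j hp
  have hjpos : 0 < j := hAdm.pos
  have h1 : w.1 = {j} := by
    ext a
    rw [Multiset.count_singleton]
    by_cases ha : a = j
    · have hle := Multiset.nodup_iff_count_le_one.mp hZ.2.2.1 j
      have hge := Multiset.one_le_count_iff_mem.mpr hp
      rw [ha, if_pos rfl]
      omega
    · rw [if_neg ha, Multiset.count_eq_zero]
      intro hmem
      exact ha (hall1 a hmem)
  have h2 : w.2 = Multiset.replicate w.2.card j := Multiset.eq_replicate_card.mpr hall2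
  have hsum : w.1.sum + w.2.sum = r := hZ.2.2.2
  rw [h1, h2] at hsum
  rw [Multiset.sum_singleton, Multiset.sum_replicate, smul_eq_mul] at hsum
  have hdvd : j ∣ r := ⟨1 + w.2.card, by rw [← hsum]; ring⟩
  have hdiv : r / j = 1 + w.2.card := by
    rw [← hsum]
    have : j + w.2.card * j = (1 + w.2.card) * j := by ring
    rw [this, Nat.mul_div_cancel _ hjpos]
  refine ⟨h1, ?_, hAdm, hdvd, hjpos⟩
  rw [hdiv]
  simpa using h2

noncomputable def divEquiv (r : Nat) (hr : 0 < r) :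
    {w : γ // (ZC r w ∧ top w ∈ w.1) ∧ ¬ 2 ≤ (sup w).card} ≃ {j : Nat // DivC r j} where
  toFun z := ⟨top z.1, (singleton_structure hr z.2).2.2⟩
  invFun j := ⟨(({j.1} : Multiset Nat), Multiset.replicate (r / j.1 - 1) j.1), by
    have hAdm := j.2.1
    have hdvd := j.2.2.1
    have hjpos := j.2.2.2
    set j := j.1 with hjdef
    have hjle : j ≤ r := Nat.le_of_dvd hr hdvd
    have hdge : 1 ≤ r / j := by
      rw [Nat.one_le_div_iff hjpos]
      exact hjle
    have htop := top_of_replicate hjpos (r / j - 1)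
    refine ⟨⟨⟨?_, ?_, Multiset.nodup_singleton j, ?_⟩, ?_⟩, ?_⟩
    · intro x hx
      rw [Multiset.mem_singleton.mp hx]
      exact hAdm
    · intro x hx
      rw [Multiset.eq_of_mem_replicate hx]
      exact hAdm
    · rw [Multiset.sum_singleton, Multiset.sum_replicate, smul_eq_mul]
      have hd : r / j = 1 + (r / j - 1) := by omega
      have he : j + (r / j - 1) * j = (1 + (r / j - 1)) * j := by ring
      rw [he, ← hd, Nat.div_mul_cancel hdvd]
    · rw [htop]
      exact Multiset.mem_singleton_self j
    · rw [sup_of_replicate hjpos]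
      simp⟩
  left_inv z := by
    obtain ⟨w, hw⟩ := z
    have hs := singleton_structure hr hw
    apply Subtype.ext
    exact Prod.ext hs.1.symm hs.2.1.symm
  right_inv j := by
    apply Subtype.ext
    exact top_of_replicate j.2.1.pos _

lemma instFinDiv (r : Nat) (hr : 0 < r) : Finite {j : Nat // DivC r j} :=
  Finite.of_injective (fun j => (⟨j.1, Nat.lt_succ_of_le (Nat.le_of_dvd hr j.2.2.1)⟩ : Fin (r+1)))
    (fun a b h => Subtype.ext (congrArg Fin.val h))

def divToggle (r : Nat) (hr2 : 2 ∣ r) :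
    {j : Nat // DivC r j ∧ Odd j} ≃ {j : Nat // DivC r j ∧ ¬ Odd j} where
  toFun j := ⟨2 * j.1, by
    have h3 := j.2.1.1.1
    have h4 := j.2.1.1.2
    have hdvd := j.2.1.2.1
    have hjpos := j.2.1.2.2
    have hodd := j.2.2
    set j := j.1 with hjdef
    refine ⟨⟨⟨?_, ?_⟩, ?_, by omega⟩, ?_⟩
    · intro hd
      have hp3 : Nat.Prime 3 := by norm_num
      rcases (Nat.Prime.dvd_mul hp3).mp hd with h | h
      · norm_num at h
      · exact h3 h
    · intro hd
      obtain ⟨c, hc⟩ := hd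
      have : j = 2 * c := by omega
      rw [Nat.odd_iff] at hodd
      omega
    · obtain ⟨k, hk⟩ := hdvd
      rcases Nat.even_or_odd k with he | ho
      · obtain ⟨c, hc⟩ := he
        exact ⟨c, by rw [hk, hc]; ring⟩
      · exfalso
        have : Odd (j * k) := hodd.mul ho
        rw [← hk] at this
        rw [Nat.odd_iff] at this
        obtain ⟨c, hc⟩ := hr2
        omega
    · rw [Nat.odd_iff]
      omega⟩
  invFun j := ⟨j.1 / 2, by
    have h3 := j.2.1.1.1
    have h4 := j.2.1.1.2
    have hdvd := j.2.1.2.1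
    have hjpos := j.2.1.2.2
    have hodd := j.2.2
    set j := j.1 with hjdef
    rw [Nat.odd_iff] at hodd
    have hj2 : j % 2 = 0 := by omega
    have hju : j = 2 * (j / 2) := by omega
    have hu : (j / 2) ∣ j := ⟨2, by omega⟩
    refine ⟨⟨⟨?_, ?_⟩, dvd_trans hu hdvd, by omega⟩, ?_⟩
    · intro hd
      exact h3 (dvd_trans hd hu)
    · intro hd
      exact h4 (dvd_trans hd hu)
    · rw [Nat.odd_iff]
      by_contra hcon
      have : j / 2 % 2 = 0 := by omega
      apply h4
      have : 4 ∣ 2 * (j / 2) := by omega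
      rw [← hju] at this
      exact this⟩
  left_inv j := by
    apply Subtype.ext
    show 2 * j.1 / 2 = j.1
    omega
  right_inv j := by
    have hodd := j.2.2
    rw [Nat.odd_iff] at hodd
    apply Subtype.ext
    show 2 * (j.1 / 2) = j.1
    omega

/-! ### assembly -/

lemma card_Zt_four_dvd (r : Nat) (hr : 0 < r) (hr2 : 2 ∣ r) [Finite (Zt r)] :
    4 ∣ Nat.card (Zt r) := by
  haveI h1 : Finite {w : γ // ZC r w ∧ top w ∈ w.1} := finite_and
  haveI h2 : Finite {w : γ // (ZC r w ∧ top w ∈ w.1) ∧ 2 ≤ (sup w).card} := finite_and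
  haveI h3 : Finite {j : Nat // DivC r j} := instFinDiv r hr
  have e1 : Nat.card (Zt r) = 2 * Nat.card {w : γ // ZC r w ∧ top w ∈ w.1} :=
    card_split (ZC r) (fun w => top w ∈ w.1) (toggleTop r hr)
  have e2 : Nat.card {w : γ // ZC r w ∧ top w ∈ w.1} =
      Nat.card {w : γ // (ZC r w ∧ top w ∈ w.1) ∧ 2 ≤ (sup w).card} +
      Nat.card {w : γ // (ZC r w ∧ top w ∈ w.1) ∧ ¬ 2 ≤ (sup w).card} :=
    card_split_add (fun w => ZC r w ∧ top w ∈ w.1) (fun w => 2 ≤ (sup w).card)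
  have e3 : Nat.card {w : γ // (ZC r w ∧ top w ∈ w.1) ∧ 2 ≤ (sup w).card} =
      2 * Nat.card {w : γ // ((ZC r w ∧ top w ∈ w.1) ∧ 2 ≤ (sup w).card) ∧ top2 w ∈ w.1} :=
    card_split (fun w => (ZC r w ∧ top w ∈ w.1) ∧ 2 ≤ (sup w).card)
      (fun w => top2 w ∈ w.1) (toggleTop2 r hr)
  have e4 : Nat.card {w : γ // (ZC r w ∧ top w ∈ w.1) ∧ ¬ 2 ≤ (sup w).card} =
      Nat.card {j : Nat // DivC r j} := Nat.card_congr (divEquiv r hr)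
  have e5 : Nat.card {j : Nat // DivC r j} =
      2 * Nat.card {j : Nat // DivC r j ∧ Odd j} :=
    card_split (DivC r) Odd (divToggle r hr2)
  rw [e1, e2, e3, e4, e5]
  exact ⟨Nat.card {w : γ // ((ZC r w ∧ top w ∈ w.1) ∧ 2 ≤ (sup w).card) ∧ top2 w ∈ w.1}
    + Nat.card {j : Nat // DivC r j ∧ Odd j}, by ring⟩

lemma card_Zt_zero : Nat.card (Zt 0) = 1 := by
  haveI : Unique (Zt 0) := {
    default := ⟨(0, 0), by
      exact ⟨fun x hx => absurd hx (Multiset.notMem_zero x),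
        fun x hx => absurd hx (Multiset.notMem_zero x), Multiset.nodup_zero, by simp⟩⟩
    uniq := by
      intro w
      obtain ⟨⟨S, T⟩, h1, h2, h3, h4⟩ := w
      apply Subtype.ext
      dsimp only at h4 ⊢
      have hS : S = 0 := by
        apply Multiset.eq_zero_of_forall_notMem
        intro x hx
        have := (h1 x hx).pos
        have := Multiset.single_le_sum (fun y _ => Nat.zero_le y) x hx
        omega
      have hT : T = 0 := by
        apply Multiset.eq_zero_of_forall_notMem
        intro x hx
        have := (h2 x hx).pos
        have := Multiset.single_le_sum (fun y _ => Nat.zero_le y) x hx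
        omega
      rw [hS, hT] }
  exact Nat.card_unique


lemma instFinYt (N : Nat) : Finite (Yt N) :=
  Set.Finite.to_subtype (((finite_sum_le N).prod ((finite_sum_le N).prod (finite_sum_le N))).subset
    (fun w hw => by
      obtain ⟨h1, h2, h3, h4, h5⟩ := hw
      exact ⟨⟨fun x hx => (h1 x hx).pos, by omega⟩,
        ⟨fun x hx => (h2 x hx).pos, by omega⟩,
        ⟨fun x hx => (h3 x hx).pos, by omega⟩⟩))

end ColReg

open ColReg in
theorem stmt_1 (n : ℕ) :
    coloredRegular 2 3 4 (2 * n) ≡ coloredRegular 1 3 4 n [MOD 4] := by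
  haveI := instFinYt (2 * n)
  have h2 : coloredRegular 2 3 4 (2 * n) = Nat.card (Xt (2 * n)) :=
    Nat.card_congr (equivTwo (2 * n))
  have h1 : coloredRegular 1 3 4 n = Nat.card (Pt n) :=
    Nat.card_congr (equivOne n)
  have hXY : Nat.card (Xt (2 * n)) = Nat.card (Yt (2 * n)) :=
    Nat.card_congr (equivXY (2 * n))
  have hY := card_Y n
  rw [h2, h1, hXY, hY]
  rw [Fin.sum_univ_castSucc]
  have hlast : (Fin.last n).1 = n := rfl
  rw [hlast]
  have hz0 : Nat.card (Zt (2 * (n - n))) = 1 := by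
    rw [Nat.sub_self, Nat.mul_zero]
    exact card_Zt_zero
  rw [hz0, Nat.mul_one]
  have hdvd : 4 ∣ ∑ i : Fin n, Nat.card (Pt ((Fin.castSucc i)).1) *
      Nat.card (Zt (2 * (n - ((Fin.castSucc i)).1))) := by
    apply Finset.dvd_sum
    intro i _
    have hi : (Fin.castSucc i).1 < n := i.2
    have hpos : 0 < 2 * (n - (Fin.castSucc i).1) := by omega
    have heven : 2 ∣ 2 * (n - (Fin.castSucc i).1) := Dvd.intro _ rfl
    exact Dvd.dvd.mul_left (card_Zt_four_dvd _ hpos heven) _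
  obtain ⟨k, hk⟩ := hdvd
  rw [hk]
  show (4 * k + Nat.card (Pt n)) % 4 = Nat.card (Pt n) % 4
  omega
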